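/- Hypercomplex Cauchy–Schwarz inequality: for any two multivectors M, N in a Clifford algebra Cl(p,q), |Sc(M·N)| ≤ |M|·|N|, where |M|² = Sc(M·M̃) and ˜ is the principal involution. -/

import Mathlib

open Finset

/-- Sign of the basis vectors of `Cl(p,q)`: `e_k² = +1` for `k < p`, `-1` otherwise. -/
def clSig (p q : ℕ) : Fin (p + q) → ℝ := fun k => if (k : ℕ) < p then 1 else -1

/-- Sign produced when multiplying the basis blades `e_A` and `e_B` of a Clifford
algebra with diagonal quadratic form of signs `ε`: a factor `-1` for each
transposition needed to sort the product, and a factor `ε k` for each common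
basis vector `e_k` squared away. -/
def csign {n : ℕ} (ε : Fin n → ℝ) (A B : Finset (Fin n)) : ℝ :=
  (-1 : ℝ) ^ (((A ×ˢ B).filter (fun ab => ab.2 < ab.1)).card) * ∏ k ∈ A ∩ B, ε k

/-- The geometric (Clifford) product on `Cl(p,q)`, represented as real
coefficient functions on the `2ⁿ` basis blades: `e_A e_B = csign ε A B • e_{A Δ B}`. -/
noncomputable def clMul {n : ℕ} (ε : Fin n → ℝ) (M N : Finset (Fin n) → ℝ) :
    Finset (Fin n) → ℝ := fun C =>
  ∑ A : Finset (Fin n), ∑ B : Finset (Fin n),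
    if symmDiff A B = C then csign ε A B * M A * N B else 0

/-- The basis blade `e_A` of `Cl(p,q)`. -/
def blade {n : ℕ} (A : Finset (Fin n)) : Finset (Fin n) → ℝ :=
  fun B => if B = A then 1 else 0

/-- The principal involution of `Cl(p,q)`: `e_k ↦ ε_k e_k` on each generating
vector, reversing the order of products; on a blade of grade `r` it acts as
multiplication by `(-1)^(r(r-1)/2) ∏_{k∈A} ε_k`. -/
def clConj {n : ℕ} (ε : Fin n → ℝ) (M : Finset (Fin n) → ℝ) :
    Finset (Fin n) → ℝ := fun A =>
  ((-1 : ℝ) ^ (A.card * (A.card - 1) / 2) * ∏ k ∈ A, ε k) * M A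

/-- The scalar (grade-0) part of a multivector. -/
def clSc {n : ℕ} (M : Finset (Fin n) → ℝ) : ℝ := M ∅

/-- The number of out-of-order pairs in `A × A` is `r(r-1)/2`. -/
theorem csign_countAA {n : ℕ} (A : Finset (Fin n)) :
    ((A ×ˢ A).filter (fun ab => ab.2 < ab.1)).card = A.card * (A.card - 1) / 2 := by
  have hb : ((A ×ˢ A).filter (fun ab => ab.2 < ab.1)).card
      = ((A ×ˢ A).filter (fun ab => ab.1 < ab.2)).card := by
    apply Finset.card_bij (fun ab _ => (ab.2, ab.1))
    · intro ab h; simp only [mem_filter, mem_product] at *; tauto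
    · intro a ha b hb h; simp only [mem_filter, mem_product] at *
      exact Prod.ext (congrArg Prod.snd h) (congrArg Prod.fst h)
    · intro b hb; exact ⟨(b.2, b.1), by simp only [mem_filter, mem_product] at *; tauto, rfl⟩
  have hu : ((A ×ˢ A).filter (fun ab => ab.2 < ab.1)) ∪ ((A ×ˢ A).filter (fun ab => ab.1 < ab.2))
      = A.offDiag := by
    rw [show A.offDiag = (A ×ˢ A).filter (fun a => a.1 ≠ a.2) from by ext; simp [Finset.mem_offDiag, and_assoc], ← Finset.filter_or]
    apply Finset.filter_congr
    intro ab _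
    constructor
    · rintro (h|h) h'
      · exact h.ne' h'
      · exact h.ne h'
    · intro h; rcases lt_or_gt_of_ne h with h|h
      · right; exact h
      · left; exact h
  have hd : Disjoint ((A ×ˢ A).filter (fun ab => ab.2 < ab.1))
      ((A ×ˢ A).filter (fun ab => ab.1 < ab.2)) := by
    rw [Finset.disjoint_left]
    intro ab h1 h2
    simp only [mem_filter] at h1 h2
    exact lt_asymm h1.2 h2.2
  have hcu := Finset.card_union_of_disjoint hd
  rw [hu, Finset.offDiag_card, ← hb] at hcu
  have h3 : A.card * (A.card - 1) = A.card * A.card - A.card := by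
    rw [Nat.mul_sub, Nat.mul_one]
  omega

theorem csign_diag {n : ℕ} (ε : Fin n → ℝ) (A : Finset (Fin n)) :
    csign ε A A = (-1 : ℝ) ^ (A.card * (A.card - 1) / 2) * ∏ k ∈ A, ε k := by
  rw [csign, csign_countAA, Finset.inter_self]

theorem csign_diag_sq {n : ℕ} (ε : Fin n → ℝ) (hε : ∀ k, ε k ^ 2 = 1)
    (A : Finset (Fin n)) : csign ε A A ^ 2 = 1 := by
  rw [csign_diag, mul_pow, ← Finset.prod_pow]
  have h1 : ((-1:ℝ) ^ (A.card * (A.card - 1) / 2)) ^ 2 = 1 := by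
    rw [← pow_mul, mul_comm, pow_mul]; norm_num
  rw [h1, one_mul]
  exact Finset.prod_eq_one fun k _ => hε k

/-- The scalar part of a Clifford product is a diagonal bilinear form. -/
theorem clSc_clMul {n : ℕ} (ε : Fin n → ℝ) (M N : Finset (Fin n) → ℝ) :
    clSc (clMul ε M N) = ∑ A : Finset (Fin n), csign ε A A * M A * N A := by
  unfold clSc clMul
  refine Finset.sum_congr rfl fun A _ => ?_
  have : ∀ B : Finset (Fin n), symmDiff A B = ∅ ↔ B = A := by
    intro B
    rw [show (∅ : Finset (Fin n)) = ⊥ from rfl, symmDiff_eq_bot]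
    exact ⟨fun h => h.symm, fun h => h.symm⟩
  calc (∑ B : Finset (Fin n), if symmDiff A B = ∅ then csign ε A B * M A * N B else 0)
      = ∑ B : Finset (Fin n), if B = A then csign ε A B * M A * N B else 0 :=
        Finset.sum_congr rfl fun B _ => if_congr (this B) rfl rfl
    _ = csign ε A A * M A * N A := by rw [Finset.sum_ite_eq' univ A]; simp

theorem clSc_norm {n : ℕ} (ε : Fin n → ℝ) (hε : ∀ k, ε k ^ 2 = 1)
    (M : Finset (Fin n) → ℝ) :
    clSc (clMul ε M (clConj ε M)) = ∑ A : Finset (Fin n), M A ^ 2 := by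
  rw [clSc_clMul]
  refine Finset.sum_congr rfl fun A _ => ?_
  unfold clConj
  rw [← csign_diag]
  have := csign_diag_sq ε hε A
  nlinarith [this]

/-- Hypercomplex Cauchy–Schwarz inequality: `|Sc(MN)| ≤ |M| |N|`, where
`|M| = √(Sc(M M̃))`. -/
theorem hypercomplex_cauchy_schwarz (p q : ℕ) (M N : Finset (Fin (p + q)) → ℝ) :
    |clSc (clMul (clSig p q) M N)| ≤
      Real.sqrt (clSc (clMul (clSig p q) M (clConj (clSig p q) M))) *
      Real.sqrt (clSc (clMul (clSig p q) N (clConj (clSig p q) N))) := by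
  set ε := clSig p q
  have hε : ∀ k, ε k ^ 2 = 1 := by
    intro k
    simp only [ε, clSig]
    split <;> norm_num
  rw [clSc_norm ε hε M, clSc_norm ε hε N, clSc_clMul]
  have habs : |∑ A : Finset (Fin (p + q)), csign ε A A * M A * N A|
      ≤ ∑ A : Finset (Fin (p + q)), |M A| * |N A| := by
    refine (Finset.abs_sum_le_sum_abs _ _).trans (le_of_eq ?_)
    refine Finset.sum_congr rfl fun A _ => ?_
    have h1 : |csign ε A A| = 1 := by
      rw [← Real.sqrt_sq_eq_abs, csign_diag_sq ε hε A, Real.sqrt_one]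
    rw [abs_mul, abs_mul, h1, one_mul]
  refine habs.trans ?_
  have key := Finset.sum_mul_sq_le_sq_mul_sq Finset.univ
    (fun A : Finset (Fin (p + q)) => |M A|) (fun A => |N A|)
  simp only [sq_abs] at key
  have h1 : (0:ℝ) ≤ ∑ A : Finset (Fin (p + q)), |M A| * |N A| :=
    Finset.sum_nonneg fun A _ => mul_nonneg (abs_nonneg _) (abs_nonneg _)
  have h2 : (0:ℝ) ≤ ∑ A : Finset (Fin (p + q)), M A ^ 2 :=
    Finset.sum_nonneg fun A _ => sq_nonneg _
  have h3 : (0:ℝ) ≤ ∑ A : Finset (Fin (p + q)), N A ^ 2 :=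
    Finset.sum_nonneg fun A _ => sq_nonneg _
  rw [← Real.sqrt_mul h2]
  rw [show (∑ A : Finset (Fin (p + q)), |M A| * |N A|) = Real.sqrt ((∑ A : Finset (Fin (p + q)), |M A| * |N A|) ^ 2) from (Real.sqrt_sq h1).symm]
  exact Real.sqrt_le_sqrt key
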